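/- arXiv:2511.02387 — 4 statements merged into one kernel-verified Lean document; each statement's English description precedes it below -/
import Mathlib

section
/- For every n > k > 0 there exists a real n×k matrix A with orthonormal columns such that for every k-element subset S of its rows, the k×k submatrix A_S formed by those rows has smallest singular value at most 1/√n; equivalently, for every S there is a unit vector x ∈ ℝᵏ with ‖A_S x‖ ≤ 1/√n. In particular, the bound √n in the Goreinov–Tyrtyshnikov–Zamarashkin hypothesis (that some k×k submatrix has an inverse of spectral norm at most √n) cannot be improved for any n and k. -/
open Matrix

open Finset

set_option linter.unusedSectionVars false
set_option linter.unusedVariables false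
set_option linter.unnecessarySeqFocus false
set_option maxHeartbeats 800000

namespace GTZAux

variable (n k : ℕ)

noncomputable def qq : ℝ := -((Real.sqrt n + 1) / (k * Real.sqrt n))
noncomputable def gg : ℝ := Real.sqrt (((n:ℝ) - 1) / ((n:ℝ) * k * ((n:ℝ) - k)))
noncomputable def ss : ℝ := -(((n:ℝ) - k + Real.sqrt n) / (k * Real.sqrt n))

noncomputable def ent (i j : ℕ) : ℝ :=
  (if i = j then 1 else 0) + (if i < k then qq n k else gg n k)

/-- row sums -/
lemma rowsum (hkn : k ≤ n) (i : ℕ) (hi : i < n) :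
    ∑ j : Fin k, ent n k i (j : ℕ)
      = (if i < k then 1 + k * qq n k else k * gg n k) := by
  have : ∑ j : Fin k, ent n k i (j : ℕ) = ∑ j ∈ range k, ent n k i j :=
    Fin.sum_univ_eq_sum_range (fun j => ent n k i j) k
  rw [this]
  unfold ent
  rw [Finset.sum_add_distrib, Finset.sum_ite_eq, Finset.sum_const]
  simp only [Finset.mem_range, Finset.card_range, nsmul_eq_mul]
  by_cases h : i < k
  · simp only [if_pos h]
  · simp only [if_neg h]
    ring

/-- delta sums : `∑_j ent i j * (если j = j₀)` -/
lemma deltasum (i : ℕ) (j₀ : Fin k) :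
    ∑ j : Fin k, ent n k i (j : ℕ) * (if j = j₀ then 1 else 0) = ent n k i (j₀ : ℕ) := by
  simp [mul_ite, mul_one, mul_zero, Finset.sum_ite_eq']

lemma ent_eq_q {i j : ℕ} (hik : i < k) (hij : i ≠ j) : ent n k i j = qq n k := by
  simp [ent, hik, hij]

lemma ent_eq_g {i : ℕ} (hik : k ≤ i) {j : ℕ} (hj : j < k) : ent n k i j = gg n k := by
  have : i ≠ j := by omega
  simp [ent, this, Nat.not_lt.mpr hik]

section facts
variable (hk : 0 < k) (hkn : k < n)
include hk hkn

lemma hr2 : Real.sqrt n * Real.sqrt n = (n:ℝ) :=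
  Real.mul_self_sqrt (Nat.cast_nonneg n)

lemma hrpos : 0 < Real.sqrt n :=
  Real.sqrt_pos.mpr (by exact_mod_cast hk.trans hkn)

lemma hKpos : 0 < (k:ℝ) := by exact_mod_cast hk

lemma hNpos : 0 < (n:ℝ) := by exact_mod_cast hk.trans hkn

lemma hNKpos : 0 < (n:ℝ) - k := by
  have : (k:ℝ) < n := by exact_mod_cast hkn
  linarith

lemma hg2 : gg n k ^ 2 = ((n:ℝ) - 1) / ((n:ℝ) * k * ((n:ℝ) - k)) := by
  have h1 : (0:ℝ) ≤ (n:ℝ) - 1 := by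
    have : (1:ℝ) ≤ n := by exact_mod_cast hk.trans hkn
    linarith
  have h2 : (0:ℝ) ≤ (n:ℝ) * k * ((n:ℝ) - k) :=
    mul_nonneg (mul_nonneg (Nat.cast_nonneg n) (Nat.cast_nonneg k)) (hNKpos n k hk hkn).le
  exact Real.sq_sqrt (div_nonneg h1 h2)

lemma h1kq : 1 + (k:ℝ) * qq n k = -(1 / Real.sqrt n) := by
  have hr' := (hrpos n k hk hkn).ne'
  have hK' := (hKpos n k hk hkn).ne'
  rw [qq]
  field_simp
  ring

lemma horth : 2 * qq n k + (k:ℝ) * qq n k ^ 2 + ((n:ℝ) - k) * gg n k ^ 2 = 0 := by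
  have hr := hrpos n k hk hkn
  have hK := hKpos n k hk hkn
  have h2 := hr2 n k hk hkn
  have hNK := hNKpos n k hk hkn
  rw [hg2 n k hk hkn, qq]
  set r : ℝ := Real.sqrt (n:ℝ) with hrdef
  rw [← h2] at hNK ⊢
  have h3 : r * r - (k:ℝ) ≠ 0 := ne_of_gt hNK
  have h3' : r ^ 2 - (k:ℝ) ≠ 0 := by rw [sq]; exact h3
  field_simp
  ring

/-- orthonormality of the matrix -/
lemma orth :
    (Matrix.of fun (i : Fin n) (j : Fin k) => ent n k (i:ℕ) (j:ℕ))ᵀ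
      * (Matrix.of fun (i : Fin n) (j : Fin k) => ent n k (i:ℕ) (j:ℕ)) = 1 := by
  ext a b
  rw [Matrix.mul_apply, Matrix.one_apply]
  simp only [Matrix.transpose_apply, Matrix.of_apply]
  have hstep : ∀ i : ℕ, i < k →
      ent n k i (a:ℕ) * ent n k i (b:ℕ)
        = (if i = (a:ℕ) then 1 else 0) * (if i = (b:ℕ) then 1 else 0)
          + (if i = (a:ℕ) then 1 else 0) * qq n k
          + (if i = (b:ℕ) then 1 else 0) * qq n k + qq n k ^ 2 := by
    intro i hi
    simp only [ent, if_pos hi]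
    ring
  have key : ∑ i : Fin n, ent n k (i:ℕ) (a:ℕ) * ent n k (i:ℕ) (b:ℕ)
      = if a = b then 1 else 0 := by
    rw [Fin.sum_univ_eq_sum_range (fun i => ent n k i (a:ℕ) * ent n k i (b:ℕ)) n]
    rw [Finset.range_eq_Ico, ← Finset.sum_Ico_consecutive _ (Nat.zero_le k) hkn.le]
    have top : ∑ i ∈ Finset.Ico 0 k, ent n k i (a:ℕ) * ent n k i (b:ℕ)
        = (if (a:ℕ) = (b:ℕ) then 1 else 0) + 2 * qq n k + k * qq n k ^ 2 := by
      rw [Finset.sum_congr rfl (fun i hi => hstep i (by simpa using (Finset.mem_Ico.mp hi).2))]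
      rw [Finset.sum_add_distrib, Finset.sum_add_distrib, Finset.sum_add_distrib]
      rw [← Finset.range_eq_Ico]
      have e1 : ∑ i ∈ range k, (if i = (a:ℕ) then (1:ℝ) else 0) * (if i = (b:ℕ) then 1 else 0)
          = if (a:ℕ) = (b:ℕ) then 1 else 0 := by
        by_cases hab : (a:ℕ) = (b:ℕ)
        · rw [if_pos hab, ← hab]
          have hcong : ∀ i ∈ range k,
              (if i = (a:ℕ) then (1:ℝ) else 0) * (if i = (a:ℕ) then 1 else 0)
                = (if i = (a:ℕ) then 1 else 0) := by
            intro i _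
            by_cases h : i = (a:ℕ) <;> simp [h]
          rw [Finset.sum_congr rfl hcong, Finset.sum_ite_eq']
          simp [Finset.mem_range, a.isLt]
        · rw [if_neg hab]
          rw [Finset.sum_eq_zero]
          intro i _
          by_cases h : i = (a:ℕ)
          · simp [h, hab]
          · simp [h]
      have e2 : ∑ i ∈ range k, (if i = (a:ℕ) then (1:ℝ) else 0) * qq n k = qq n k := by
        rw [← Finset.sum_mul]
        simp [Finset.sum_ite_eq', Finset.mem_range, a.isLt]
      have e3 : ∑ i ∈ range k, (if i = (b:ℕ) then (1:ℝ) else 0) * qq n k = qq n k := by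
        rw [← Finset.sum_mul]
        simp [Finset.sum_ite_eq', Finset.mem_range, b.isLt]
      have e4 : ∑ _i ∈ range k, qq n k ^ 2 = k * qq n k ^ 2 := by
        rw [Finset.sum_const, Finset.card_range, nsmul_eq_mul]
      rw [e1, e2, e3, e4]
      ring
    have bot : ∑ i ∈ Finset.Ico k n, ent n k i (a:ℕ) * ent n k i (b:ℕ)
        = ((n:ℝ) - k) * gg n k ^ 2 := by
      rw [Finset.sum_congr rfl (fun i hi => by
        have hik : k ≤ i := (Finset.mem_Ico.mp hi).1
        rw [ent_eq_g n k hik a.isLt, ent_eq_g n k hik b.isLt, ← sq])]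
      rw [Finset.sum_const, Nat.card_Ico, nsmul_eq_mul]
      rw [Nat.cast_sub hkn.le]
    rw [top, bot]
    have ho := horth n k hk hkn
    have hab : (if (a:ℕ) = (b:ℕ) then (1:ℝ) else 0) = (if a = b then 1 else 0) := by
      simp [Fin.ext_iff]
    rw [hab]
    by_cases h : a = b <;> simp [h] <;> linarith
  exact key




/-- `q + s(1+kq) = -1/n` -/
lemma hvtop : qq n k + ss n k * (1 + (k:ℝ) * qq n k) = -(1 / (n:ℝ)) := by
  have hr := hrpos n k hk hkn
  have hK := hKpos n k hk hkn
  have h2 := hr2 n k hk hkn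
  rw [h1kq n k hk hkn, qq, ss]
  set r : ℝ := Real.sqrt (n:ℝ) with hrdef
  rw [← h2]
  have hr' := hr.ne'
  have hK' := hK.ne'
  field_simp
  ring

/-- `1 + k s = -(n-k)/r` -/
lemma h1ks : 1 + (k:ℝ) * ss n k = -(((n:ℝ) - k) / Real.sqrt n) := by
  have hr := hrpos n k hk hkn
  have hK := hKpos n k hk hkn
  have h2 := hr2 n k hk hkn
  rw [ss]
  set r : ℝ := Real.sqrt (n:ℝ) with hrdef
  rw [← h2]
  have hr' := hr.ne'
  have hK' := hK.ne'
  field_simp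
  ring

/-- value of `1 + 2s + k s²` -/
lemma hwval : 1 + 2 * ss n k + (k:ℝ) * ss n k ^ 2
    = (((n:ℝ) - k) ^ 2 + (n:ℝ) * ((k:ℝ) - 1)) / ((k:ℝ) * (n:ℝ)) := by
  have hr := hrpos n k hk hkn
  have hK := hKpos n k hk hkn
  have h2 := hr2 n k hk hkn
  rw [ss]
  set r : ℝ := Real.sqrt (n:ℝ) with hrdef
  rw [← h2]
  have hr' := hr.ne'
  have hK' := hK.ne'
  field_simp
  ring

lemma hwpos : 0 < 1 + 2 * ss n k + (k:ℝ) * ss n k ^ 2 := by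
  rw [hwval n k hk hkn]
  have h1 := hNKpos n k hk hkn
  have h2 := hKpos n k hk hkn
  have h3 := hNpos n k hk hkn
  have h4 : (1:ℝ) ≤ (k:ℝ) := by exact_mod_cast hk
  have : (0:ℝ) < ((n:ℝ) - k) ^ 2 := by positivity
  have : (0:ℝ) ≤ (n:ℝ) * ((k:ℝ) - 1) := by nlinarith
  positivity

/-- the main identity for the mixed case -/
lemma hmain : ((k:ℝ) - 1) * (-(1 / (n:ℝ))) ^ 2 + gg n k ^ 2 * (1 + (k:ℝ) * ss n k) ^ 2
    = (1 + 2 * ss n k + (k:ℝ) * ss n k ^ 2) / (n:ℝ) := by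
  have hr := hrpos n k hk hkn
  have hK := hKpos n k hk hkn
  have hNK := hNKpos n k hk hkn
  have h2 := hr2 n k hk hkn
  rw [hg2 n k hk hkn, h1ks n k hk hkn, hwval n k hk hkn]
  set r : ℝ := Real.sqrt (n:ℝ) with hrdef
  rw [← h2] at hNK ⊢
  have hr' := hr.ne'
  have hK' := hK.ne'
  have h3 : r * r - (k:ℝ) ≠ 0 := ne_of_gt hNK
  field_simp
  ring

end facts

/-- bijection cardinality lemma -/
lemma card_topfilter (hkn : k < n) (S : Finset (Fin n)) :
    (Finset.univ.filter (fun j : Fin k => Fin.castLE hkn.le j ∈ S)).card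
      = (S.filter (fun i : Fin n => (i:ℕ) < k)).card := by
  apply Finset.card_bij (fun j _ => Fin.castLE hkn.le j)
  · intro a ha
    simp only [Finset.mem_filter, Finset.mem_univ, true_and] at ha
    simp only [Finset.mem_filter]
    exact ⟨ha, by simp [a.isLt]⟩
  · intro a₁ _ a₂ _ h
    exact Fin.castLE_injective hkn.le h
  · intro i hi
    simp only [Finset.mem_filter] at hi
    refine ⟨⟨(i:ℕ), hi.2⟩, ?_, ?_⟩
    · simp only [Finset.mem_filter, Finset.mem_univ, true_and]
      have : Fin.castLE hkn.le ⟨(i:ℕ), hi.2⟩ = i := by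
        apply Fin.ext
        simp
      rw [this]
      exact hi.1
    · apply Fin.ext
      simp

end GTZAux

open GTZAux

/-- **Sharpness of the Goreinov–Tyrtyshnikov–Zamarashkin bound.**
For every `n > k > 0` there is a real `n × k` matrix `A` with orthonormal columns
(`Aᵀ A = 1`) such that for every `k`-element subset `S` of rows there is a unit vector
`x ∈ ℝᵏ` with `‖A_S x‖ ≤ 1 / √n`  (i.e. the smallest singular value of every `k × k`
submatrix `A_S` is at most `1 / √n`, so the bound `√n` on the spectral norm of the
inverse of the best submatrix cannot be improved). -/
theorem gtz_bound_cannot_be_improved (n k : ℕ) (hk : 0 < k) (hkn : k < n) :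
    ∃ A : Matrix (Fin n) (Fin k) ℝ,
      Aᵀ * A = 1 ∧
      ∀ S : Finset (Fin n), S.card = k →
        ∃ x : EuclideanSpace ℝ (Fin k), ‖x‖ = 1 ∧
          Real.sqrt (∑ i ∈ S, (∑ j, A i j * x j) ^ 2) ≤ 1 / Real.sqrt n := by
  have hKpos : (0:ℝ) < k := by exact_mod_cast hk
  have hNpos : (0:ℝ) < n := by exact_mod_cast hk.trans hkn
  refine ⟨Matrix.of fun (i : Fin n) (j : Fin k) => ent n k (i:ℕ) (j:ℕ),
    orth n k hk hkn, ?_⟩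
  intro S hS
  have hsplit : (S.filter (fun i : Fin n => (i:ℕ) < k)).card
      + (S.filter (fun i : Fin n => ¬ (i:ℕ) < k)).card = k := by
    rw [Finset.card_filter_add_card_filter_not, hS]
  obtain ht0 | ht1 | ht2 :
      (S.filter (fun i : Fin n => ¬ (i:ℕ) < k)).card = 0
      ∨ (S.filter (fun i : Fin n => ¬ (i:ℕ) < k)).card = 1
      ∨ 2 ≤ (S.filter (fun i : Fin n => ¬ (i:ℕ) < k)).card := by omega
  -- ### Case: S entirely inside the top k rows
  · have hmem : ∀ i ∈ S, (i:ℕ) < k := by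
      intro i hi
      by_contra h
      have : i ∈ S.filter (fun i : Fin n => ¬ (i:ℕ) < k) := Finset.mem_filter.mpr ⟨hi, h⟩
      rw [Finset.card_eq_zero.mp ht0] at this
      exact absurd this (Finset.notMem_empty i)
    refine ⟨(WithLp.toLp 2 (fun _ => (Real.sqrt k)⁻¹) : EuclideanSpace ℝ (Fin k)), ?_, ?_⟩
    · rw [EuclideanSpace.norm_eq]
      simp only [PiLp.toLp_apply]
      have h1 : ∑ j : Fin k, ‖(Real.sqrt k)⁻¹‖ ^ 2 = (k:ℝ) * ((Real.sqrt k) ^ 2)⁻¹ := by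
        rw [Finset.sum_const, Finset.card_univ, Fintype.card_fin, nsmul_eq_mul,
          Real.norm_eq_abs, sq_abs, inv_pow]
      rw [h1, Real.sq_sqrt hKpos.le, mul_inv_cancel₀ hKpos.ne', Real.sqrt_one]
    · simp only [PiLp.toLp_apply]
      have hinner : ∀ i ∈ S,
          (∑ j : Fin k, (Matrix.of fun (i : Fin n) (j : Fin k) => ent n k (i:ℕ) (j:ℕ)) i j
            * (Real.sqrt k)⁻¹) = -(1 / Real.sqrt n) * (Real.sqrt k)⁻¹ := by
        intro i hi
        simp only [Matrix.of_apply]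
        rw [← Finset.sum_mul, rowsum n k hkn.le (i:ℕ) i.isLt, if_pos (hmem i hi),
          h1kq n k hk hkn]
      have heq : ∑ i ∈ S,
          (∑ j : Fin k, (Matrix.of fun (i : Fin n) (j : Fin k) => ent n k (i:ℕ) (j:ℕ)) i j
            * (Real.sqrt k)⁻¹) ^ 2 = ((n:ℝ))⁻¹ := by
        rw [Finset.sum_congr rfl (fun i hi => by rw [hinner i hi])]
        rw [Finset.sum_const, hS, nsmul_eq_mul]
        rw [mul_pow, neg_pow, div_pow, one_pow, Real.sq_sqrt hNpos.le, inv_pow,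
          Real.sq_sqrt hKpos.le]
        field_simp
      rw [heq, Real.sqrt_inv, one_div]
  -- ### Case: exactly one bottom row
  · -- exactly one bottom row
    have hPcard : (Finset.univ.filter (fun j : Fin k => ¬ Fin.castLE hkn.le j ∈ S)).card
        + (S.filter (fun i : Fin n => (i:ℕ) < k)).card = k := by
      rw [← card_topfilter n k hkn S]
      have := Finset.card_filter_add_card_filter_not
        (s := (Finset.univ : Finset (Fin k))) (fun j : Fin k => Fin.castLE hkn.le j ∈ S)
      rw [Finset.card_univ, Fintype.card_fin] at this
      omega
    have hP1 : (Finset.univ.filter (fun j : Fin k => ¬ Fin.castLE hkn.le j ∈ S)).card = 1 := by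
      omega
    obtain ⟨r₀, hr₀⟩ := Finset.card_eq_one.mp hP1
    have hr₀S : Fin.castLE hkn.le r₀ ∉ S := by
      have : r₀ ∈ Finset.univ.filter (fun j : Fin k => ¬ Fin.castLE hkn.le j ∈ S) := by
        rw [hr₀]; exact Finset.mem_singleton_self r₀
      exact (Finset.mem_filter.mp this).2
    have htopcard : (S.filter (fun i : Fin n => (i:ℕ) < k)).card = k - 1 := by omega
    -- numeric facts
    have hwpos' := hwpos n k hk hkn
    set w : ℝ := Real.sqrt (1 + 2 * ss n k + (k:ℝ) * ss n k ^ 2) with hwdef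
    have hw2 : w ^ 2 = 1 + 2 * ss n k + (k:ℝ) * ss n k ^ 2 := Real.sq_sqrt hwpos'.le
    have hwne : w ≠ 0 := by
      rw [hwdef]
      exact (Real.sqrt_pos.mpr hwpos').ne'
    refine ⟨(WithLp.toLp 2 (fun j => ((if j = r₀ then 1 else 0) + ss n k) / w)
        : EuclideanSpace ℝ (Fin k)), ?_, ?_⟩
    · rw [EuclideanSpace.norm_eq]
      simp only [PiLp.toLp_apply]
      have h1 : ∀ j : Fin k,
          ‖((if j = r₀ then (1:ℝ) else 0) + ss n k) / w‖ ^ 2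
          = ((if j = r₀ then 1 else 0) + 2 * ss n k * (if j = r₀ then 1 else 0)
              + ss n k ^ 2) / w ^ 2 := by
        intro j
        rw [Real.norm_eq_abs, sq_abs, div_pow]
        congr 1
        by_cases h : j = r₀ <;> simp [h] <;> ring
      rw [Finset.sum_congr rfl (fun j _ => h1 j), ← Finset.sum_div,
        Finset.sum_add_distrib, Finset.sum_add_distrib,
        Finset.sum_ite_eq' Finset.univ r₀ (fun _ => (1:ℝ)), ← Finset.mul_sum,
        Finset.sum_ite_eq' Finset.univ r₀ (fun _ => (1:ℝ)), Finset.sum_const,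
        Finset.card_univ, Fintype.card_fin, nsmul_eq_mul]
      simp only [Finset.mem_univ, if_pos, mul_one]
      rw [hw2, div_self hwpos'.ne', Real.sqrt_one]
    · -- the sum over S
      simp only [PiLp.toLp_apply]
      have hvt := hvtop n k hk hkn
      have hinner_top : ∀ i ∈ S.filter (fun i : Fin n => (i:ℕ) < k),
          (∑ j : Fin k, (Matrix.of fun (i : Fin n) (j : Fin k) => ent n k (i:ℕ) (j:ℕ)) i j
            * (((if j = r₀ then 1 else 0) + ss n k) / w)) = -(1 / (n:ℝ)) / w := by
        intro i hi
        obtain ⟨hiS, hik⟩ := Finset.mem_filter.mp hi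
        have hir : (i:ℕ) ≠ (r₀:ℕ) := by
          intro h
          exact hr₀S (by rwa [show Fin.castLE hkn.le r₀ = i from Fin.ext (by simp [← h])])
        simp only [Matrix.of_apply]
        have e1 : ∀ j : Fin k, ent n k (i:ℕ) (j:ℕ)
            * (((if j = r₀ then 1 else 0) + ss n k) / w)
            = (ent n k (i:ℕ) (j:ℕ) * (if j = r₀ then 1 else 0)
              + ent n k (i:ℕ) (j:ℕ) * ss n k) / w := by
          intro j; ring
        rw [Finset.sum_congr rfl (fun j _ => e1 j), ← Finset.sum_div,
          Finset.sum_add_distrib, deltasum, ← Finset.sum_mul,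
          rowsum n k hkn.le (i:ℕ) i.isLt, if_pos hik, ent_eq_q n k hik hir]
        congr 1
        rw [← hvt]
        ring
      have hinner_bot : ∀ i ∈ S.filter (fun i : Fin n => ¬ (i:ℕ) < k),
          (∑ j : Fin k, (Matrix.of fun (i : Fin n) (j : Fin k) => ent n k (i:ℕ) (j:ℕ)) i j
            * (((if j = r₀ then 1 else 0) + ss n k) / w))
            = gg n k * (1 + (k:ℝ) * ss n k) / w := by
        intro i hi
        obtain ⟨hiS, hik⟩ := Finset.mem_filter.mp hi
        have hik' : k ≤ (i:ℕ) := Nat.le_of_not_lt hik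
        simp only [Matrix.of_apply]
        have e1 : ∀ j : Fin k, ent n k (i:ℕ) (j:ℕ)
            * (((if j = r₀ then 1 else 0) + ss n k) / w)
            = (gg n k * (if j = r₀ then 1 else 0) + gg n k * ss n k) / w := by
          intro j
          rw [ent_eq_g n k hik' j.isLt]
          ring
        rw [Finset.sum_congr rfl (fun j _ => e1 j), ← Finset.sum_div,
          Finset.sum_add_distrib]
        have e2 : ∑ j : Fin k, gg n k * (if j = r₀ then (1:ℝ) else 0) = gg n k := by
          simp [mul_ite, mul_one, mul_zero, Finset.sum_ite_eq']
        rw [e2, Finset.sum_const, Finset.card_univ, Fintype.card_fin, nsmul_eq_mul]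
        congr 1
        ring
      have heq : ∑ i ∈ S,
          (∑ j : Fin k, (Matrix.of fun (i : Fin n) (j : Fin k) => ent n k (i:ℕ) (j:ℕ)) i j
            * (((if j = r₀ then 1 else 0) + ss n k) / w)) ^ 2 = ((n:ℝ))⁻¹ := by
        rw [← Finset.sum_filter_add_sum_filter_not S (fun i : Fin n => (i:ℕ) < k)]
        have e_top : ∑ i ∈ S.filter (fun i : Fin n => (i:ℕ) < k),
            (∑ j : Fin k, (Matrix.of fun (i : Fin n) (j : Fin k) => ent n k (i:ℕ) (j:ℕ)) i j
              * (((if j = r₀ then 1 else 0) + ss n k) / w)) ^ 2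
            = ∑ _i ∈ S.filter (fun i : Fin n => (i:ℕ) < k), (-(1/(n:ℝ))/w) ^ 2 :=
          Finset.sum_congr rfl (fun i hi => by rw [hinner_top i hi])
        have e_bot : ∑ i ∈ S.filter (fun i : Fin n => ¬ (i:ℕ) < k),
            (∑ j : Fin k, (Matrix.of fun (i : Fin n) (j : Fin k) => ent n k (i:ℕ) (j:ℕ)) i j
              * (((if j = r₀ then 1 else 0) + ss n k) / w)) ^ 2
            = ∑ _i ∈ S.filter (fun i : Fin n => ¬ (i:ℕ) < k),
                (gg n k * (1 + (k:ℝ) * ss n k) / w) ^ 2 :=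
          Finset.sum_congr rfl (fun i hi => by rw [hinner_bot i hi])
        rw [e_top, e_bot]
        rw [Finset.sum_const, Finset.sum_const, htopcard, ht1, nsmul_eq_mul, nsmul_eq_mul,
          Nat.cast_sub hk, Nat.cast_one]
        have hm := hmain n k hk hkn
        rw [div_pow, div_pow, mul_pow]
        rw [← hw2] at hm
        have hne : w ^ 2 ≠ 0 := pow_ne_zero 2 hwne
        have hNne : (n:ℝ) ≠ 0 := hNpos.ne'
        field_simp at hm ⊢
        nlinarith [hm]
      rw [heq, Real.sqrt_inv, one_div]
  -- ### Case: at least two bottom rows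
  · have hPcard : (Finset.univ.filter (fun j : Fin k => ¬ Fin.castLE hkn.le j ∈ S)).card
        + (S.filter (fun i : Fin n => (i:ℕ) < k)).card = k := by
      rw [← card_topfilter n k hkn S]
      have := Finset.card_filter_add_card_filter_not
        (s := (Finset.univ : Finset (Fin k))) (fun j : Fin k => Fin.castLE hkn.le j ∈ S)
      rw [Finset.card_univ, Fintype.card_fin] at this
      omega
    have h2le : 1 < (Finset.univ.filter
        (fun j : Fin k => ¬ Fin.castLE hkn.le j ∈ S)).card := by omega
    obtain ⟨a, ha, b, hb, hab⟩ := Finset.one_lt_card.mp h2le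
    have haS : Fin.castLE hkn.le a ∉ S := (Finset.mem_filter.mp ha).2
    have hbS : Fin.castLE hkn.le b ∉ S := (Finset.mem_filter.mp hb).2
    have hy : ∀ j : Fin k, ((if j = a then (1:ℝ) else 0) - (if j = b then 1 else 0)) ^ 2
        = (if j = a then 1 else 0) + (if j = b then 1 else 0) := by
      intro j
      by_cases h1 : j = a <;> by_cases h2 : j = b
      · exact absurd (h1.symm.trans h2) hab
      · simp [h1, h2, hab]
      · simp [h1, h2, Ne.symm hab]
      · simp [h1, h2]
    refine ⟨(WithLp.toLp 2 (fun j => ((if j = a then 1 else 0) - (if j = b then 1 else 0)) / Real.sqrt 2)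
        : EuclideanSpace ℝ (Fin k)), ?_, ?_⟩
    · rw [EuclideanSpace.norm_eq]
      simp only [PiLp.toLp_apply]
      have h1 : ∀ j : Fin k,
          ‖((if j = a then (1:ℝ) else 0) - (if j = b then 1 else 0)) / Real.sqrt 2‖ ^ 2
          = ((if j = a then 1 else 0) + (if j = b then 1 else 0)) / 2 := by
        intro j
        rw [Real.norm_eq_abs, sq_abs, div_pow, Real.sq_sqrt (by norm_num : (0:ℝ) ≤ 2), hy j]
      rw [Finset.sum_congr rfl (fun j _ => h1 j), ← Finset.sum_div, Finset.sum_add_distrib]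
      rw [Finset.sum_ite_eq' Finset.univ a (fun _ => (1:ℝ)),
        Finset.sum_ite_eq' Finset.univ b (fun _ => (1:ℝ))]
      simp
    · simp only [PiLp.toLp_apply]
      have hinner : ∀ i ∈ S,
          (∑ j : Fin k, (Matrix.of fun (i : Fin n) (j : Fin k) => ent n k (i:ℕ) (j:ℕ)) i j
            * (((if j = a then 1 else 0) - (if j = b then 1 else 0)) / Real.sqrt 2)) = 0 := by
        intro i hi
        simp only [Matrix.of_apply]
        have e1 : ∀ j : Fin k, ent n k (i:ℕ) (j:ℕ)
            * (((if j = a then 1 else 0) - (if j = b then 1 else 0)) / Real.sqrt 2)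
            = (ent n k (i:ℕ) (j:ℕ) * (if j = a then 1 else 0)
              - ent n k (i:ℕ) (j:ℕ) * (if j = b then 1 else 0)) / Real.sqrt 2 := by
          intro j; ring
        rw [Finset.sum_congr rfl (fun j _ => e1 j), ← Finset.sum_div,
          Finset.sum_sub_distrib, deltasum, deltasum]
        by_cases hik : (i:ℕ) < k
        · have hia : (i:ℕ) ≠ (a:ℕ) := by
            intro h
            exact haS (by rwa [show Fin.castLE hkn.le a = i from Fin.ext (by simp [← h])])
          have hib : (i:ℕ) ≠ (b:ℕ) := by
            intro h
            exact hbS (by rwa [show Fin.castLE hkn.le b = i from Fin.ext (by simp [← h])])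
          rw [ent_eq_q n k hik hia, ent_eq_q n k hik hib, sub_self, zero_div]
        · rw [ent_eq_g n k (Nat.le_of_not_lt hik) a.isLt,
            ent_eq_g n k (Nat.le_of_not_lt hik) b.isLt, sub_self, zero_div]
      have heq : ∑ i ∈ S,
          (∑ j : Fin k, (Matrix.of fun (i : Fin n) (j : Fin k) => ent n k (i:ℕ) (j:ℕ)) i j
            * (((if j = a then 1 else 0) - (if j = b then 1 else 0)) / Real.sqrt 2)) ^ 2
          = 0 := by
        rw [Finset.sum_congr rfl (fun i hi => by rw [hinner i hi])]
        simp
      rw [heq, Real.sqrt_zero]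
      positivity
end

section
/- For every n ≥ 2 and every index i ∈ {1,…,n}, the infimum over unit vectors v ∈ ℝⁿ with v₁ + v₂ + ⋯ + v_n = 0 of the norm of the orthogonal projection of v onto the coordinate hyperplane {x ∈ ℝⁿ : x_i = 0} equals 1/√n; equivalently, the largest principal angle between the hyperplane of zero-sum vectors and each coordinate hyperplane equals arccos(1/√n). (This realizes the extremal subspace associated with the n-cycle, whose G-induced edge weights are all equal.) -/
/-- For every `n ≥ 2` and every coordinate `i`, the infimum, over unit vectors
`v ∈ ℝⁿ` with zero coordinate sum, of the norm of the orthogonal projection of `v`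
onto the coordinate hyperplane `{x : x i = 0}` (that norm being
`√(∑_{j ≠ i} v j ^ 2)`) equals `1 / √n`; i.e. the largest principal angle between the
zero-sum hyperplane and each coordinate hyperplane is `arccos (1/√n)`. -/
theorem zero_sum_hyperplane_deviation (n : ℕ) (hn : 2 ≤ n) (i : Fin n) :
    sInf {r : ℝ | ∃ v : EuclideanSpace ℝ (Fin n), ‖v‖ = 1 ∧ (∑ j, v j) = 0 ∧
        r = Real.sqrt (∑ j ∈ Finset.univ.erase i, v j ^ 2)} = 1 / Real.sqrt n := by
  have hn2 : (2:ℝ) ≤ (n:ℝ) := by exact_mod_cast hn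
  have hnpos : (0:ℝ) < n := by linarith
  have hm : (0:ℝ) < (n:ℝ) - 1 := by linarith
  set c : ℝ := Real.sqrt (((n:ℝ) - 1) * n) with hc
  have hcpos : 0 < c := Real.sqrt_pos.2 (by positivity)
  have hc2 : c ^ 2 = ((n:ℝ) - 1) * n := Real.sq_sqrt (by positivity)
  -- the witness vector
  set v : EuclideanSpace ℝ (Fin n) := WithLp.toLp 2 (fun j => if j = i then -((n:ℝ) - 1)/c else 1/c) with hv
  have hvi : v i = -((n:ℝ) - 1)/c := by simp [hv]
  have hvj : ∀ j, j ≠ i → v j = 1/c := by intro j hj; simp [hv, hj]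
  have hcard : (Finset.univ.erase i).card = n - 1 := by
    rw [Finset.card_erase_of_mem (Finset.mem_univ i), Finset.card_univ, Fintype.card_fin]
  have hcardR : ((Finset.univ.erase i).card : ℝ) = (n:ℝ) - 1 := by
    rw [hcard]; push_cast [Nat.cast_sub (by omega : 1 ≤ n)]; ring
  have hsum_erase : ∀ (f : Fin n → ℝ), ∑ j, f j = f i + ∑ j ∈ Finset.univ.erase i, f j := by
    intro f
    rw [← Finset.add_sum_erase _ f (Finset.mem_univ i)]
  have hsq_erase : ∑ j ∈ Finset.univ.erase i, v j ^ 2 = ((n:ℝ) - 1) / c ^ 2 := by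
    rw [Finset.sum_congr rfl (fun j hj => by
      rw [hvj j (Finset.ne_of_mem_erase hj)]), Finset.sum_const, hcard]
    rw [nsmul_eq_mul]
    push_cast [Nat.cast_sub (by omega : 1 ≤ n)]
    field_simp
  have hmem : (1 / Real.sqrt n) ∈ {r : ℝ | ∃ v : EuclideanSpace ℝ (Fin n), ‖v‖ = 1 ∧ (∑ j, v j) = 0 ∧
        r = Real.sqrt (∑ j ∈ Finset.univ.erase i, v j ^ 2)} := by
    refine ⟨v, ?_, ?_, ?_⟩
    · rw [EuclideanSpace.norm_eq]
      have : ∑ j, ‖v j‖ ^ 2 = 1 := by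
        have := hsum_erase (fun j => ‖v j‖ ^ 2)
        simp only [Real.norm_eq_abs, sq_abs] at this ⊢
        rw [this, hsq_erase, hvi]
        field_simp
        rw [hc2]; ring
      rw [this, Real.sqrt_one]
    · rw [hsum_erase, hvi, Finset.sum_congr rfl (fun j hj => hvj j (Finset.ne_of_mem_erase hj)),
        Finset.sum_const, nsmul_eq_mul, hcardR]
      field_simp
      ring
    · rw [hsq_erase, hc2]
      have h : ((n:ℝ)-1)/(((n:ℝ)-1)*n) = 1/n := by field_simp
      rw [h, one_div, one_div, Real.sqrt_inv]
  refine le_antisymm (csInf_le ⟨0, ?_⟩ hmem) (le_csInf ⟨_, hmem⟩ ?_)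
  · rintro r ⟨w, -, -, rfl⟩; exact Real.sqrt_nonneg _
  · rintro r ⟨w, hw1, hw0, rfl⟩
    -- lower bound
    set s := ∑ j ∈ Finset.univ.erase i, w j ^ 2 with hs
    have hsnn : 0 ≤ s := Finset.sum_nonneg (fun j _ => sq_nonneg _)
    have hwsq : w i ^ 2 + s = 1 := by
      have h1 : ∑ j, w j ^ 2 = 1 := by
        have := EuclideanSpace.norm_eq w
        rw [hw1] at this
        have h2 : ∑ j, ‖w j‖ ^ 2 = 1 := by
          nlinarith [Real.sq_sqrt (Finset.sum_nonneg (fun j (_ : j ∈ Finset.univ) => sq_nonneg ‖w j‖)), this]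
        simpa [sq_abs] using h2
      rw [← h1, hsum_erase (fun j => w j ^ 2)]
    have hwi : w i = -∑ j ∈ Finset.univ.erase i, w j := by
      have := hsum_erase w; rw [hw0] at this; linarith
    have hCS : w i ^ 2 ≤ ((n:ℝ) - 1) * s := by
      rw [hwi, neg_sq]
      have h := sq_sum_le_card_mul_sum_sq (s := Finset.univ.erase i) (f := fun j => w j)
      rwa [hcardR] at h
    have hslb : 1 / (n:ℝ) ≤ s := by
      rw [div_le_iff₀ hnpos]; nlinarith
    calc 1 / Real.sqrt n = Real.sqrt (1 / n) := by
          rw [one_div, one_div, Real.sqrt_inv]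
      _ ≤ Real.sqrt s := Real.sqrt_le_sqrt hslb
end

section
/- Let G be a nontrivial 2-connected series-parallel graph on n edges with a chosen pair of terminals, and let G* be the dual two-terminal series-parallel graph obtained by exchanging the roles of parallel and serial compositions in the decomposition of G (so G* has the same edge set and n edges). Then for every edge e, the G*-induced weight of e is the reciprocal of the G-induced weight of e: w*_e = 1/w_e. -/
/-- Decomposition tree of a two-terminal series-parallel graph: a leaf is a single
edge, `par` is a parallel composition, `ser` is a serial composition. -/
inductive SPTree (E : Type) : Type
  | leaf (e : E) : SPTree E
  | par (ts : List (SPTree E)) : SPTree E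
  | ser (ts : List (SPTree E)) : SPTree E

/-- The list of edges (leaves) of a series-parallel decomposition tree. -/
def SPTree.edgeList {E : Type} : SPTree E → List E
  | .leaf e => [e]
  | .par ts => (ts.attach.map (fun s => edgeList s.1)).flatten
  | .ser ts => (ts.attach.map (fun s => edgeList s.1)).flatten
decreasing_by
  all_goals simp only [SPTree.par.sizeOf_spec, SPTree.ser.sizeOf_spec]
  all_goals have := List.sizeOf_lt_of_mem s.2
  all_goals omega

/-- Number of edges of (the subgraph described by) a decomposition tree. -/
def SPTree.numEdges {E : Type} (t : SPTree E) : ℕ := t.edgeList.length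

/-- φ(x) = x (n - x). -/
noncomputable def phiR (n x : ℕ) : ℝ := (x : ℝ) * ((n : ℝ) - (x : ℝ))

/-- `SPWeight n b t e x` : the contribution to the `G`-induced weight of edge `e`
coming from the part of the decomposition chain below node `t`; `b = true` when `t`
is the root or the child of a serial node ("parallel position"), `b = false` when `t`
is the child of a parallel node ("serial position").  Children of parallel nodes
contribute numerators `φ(|Γ|)`, children of serial nodes contribute denominators
`φ(|Γ|)⁻¹`, and a chain ending in a leaf on a parallel position is padded by a
dummy serial decomposition.  For a 2-sp-graph whose decomposition tree `t` is
parallel at the root, the `G`-induced weight `w_e` is characterized by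
`SPWeight n true t e w_e` (`n` = total number of edges). -/
inductive SPWeight {E : Type} (n : ℕ) : Bool → SPTree E → E → ℝ → Prop
  | leafP (e : E) : SPWeight n true (.leaf e) e 1
  | leafS (e : E) : SPWeight n false (.leaf e) e (phiR n 1)⁻¹
  | par {ts : List (SPTree E)} {t : SPTree E} {e : E} {x : ℝ} :
      t ∈ ts → SPWeight n false t e x →
      SPWeight n true (.par ts) e (phiR n t.numEdges * x)
  | ser {ts : List (SPTree E)} {t : SPTree E} {e : E} {x : ℝ} :
      t ∈ ts → SPWeight n true t e x →
      SPWeight n false (.ser ts) e ((phiR n t.numEdges)⁻¹ * x)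

/-- `SPRealizes head tail t a b S` : the decomposition tree `t` is realized in the
directed multigraph with edge endpoint maps `head`, `tail` as the two-terminal
series-parallel (sub)graph with left terminal `a`, right terminal `b` and vertex set
`S`; pieces of a parallel composition meet exactly in the two terminals, pieces of a
serial composition are chained along junction vertices and are otherwise disjoint. -/
inductive SPRealizes {V E : Type} (head tail : E → V) : SPTree E → V → V → Set V → Prop
  | leaf_pos {e : E} {a b : V} : a ≠ b → tail e = a → head e = b →
      SPRealizes head tail (.leaf e) a b {a, b}
  | leaf_neg {e : E} {a b : V} : a ≠ b → tail e = b → head e = a →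
      SPRealizes head tail (.leaf e) a b {a, b}
  | par {ts : List (SPTree E)} {a b : V} (S : Fin ts.length → Set V) :
      ts ≠ [] →
      (∀ i, SPRealizes head tail (ts.get i) a b (S i)) →
      (∀ i j, i ≠ j → S i ∩ S j = {a, b}) →
      SPRealizes head tail (.par ts) a b (⋃ i, S i)
  | ser {ts : List (SPTree E)} {a b : V} (S : Fin ts.length → Set V)
      (v : Fin (ts.length + 1) → V) :
      ts ≠ [] →
      v 0 = a → v (Fin.last ts.length) = b →
      (∀ i, SPRealizes head tail (ts.get i) (v i.castSucc) (v i.succ) (S i)) →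
      (∀ i j : Fin ts.length, (i : ℕ) + 1 = (j : ℕ) → S i ∩ S j = {v j.castSucc}) →
      (∀ i j : Fin ts.length, (i : ℕ) + 1 < (j : ℕ) → S i ∩ S j = ∅) →
      SPRealizes head tail (.ser ts) a b (⋃ i, S i)


/-- The dual of a two-terminal series-parallel decomposition tree: duality exchanges
parallel and serial compositions and keeps the edges. -/
def SPTree.dual {E : Type} : SPTree E → SPTree E
  | .leaf e => .leaf e
  | .par ts => .ser (ts.attach.map (fun s => dual s.1))
  | .ser ts => .par (ts.attach.map (fun s => dual s.1))
decreasing_by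
  all_goals simp only [SPTree.par.sizeOf_spec, SPTree.ser.sizeOf_spec]
  all_goals have := List.sizeOf_lt_of_mem s.2
  all_goals omega

/-- The `G*`-induced weights of a serially rooted dual tree: the roles of parallel and
serial compositions in the computation of graph-induced weights are exchanged
(parallel children still contribute numerators `φ(|Γ|)`, serial children denominators
`φ(|Γ|)⁻¹`, and the dummy padding at the leaves is mirrored).  `b = true` is the
position of the root or of a child of a parallel node. -/
inductive SPWeightD {E : Type} (n : ℕ) : Bool → SPTree E → E → ℝ → Prop
  | leafP (e : E) : SPWeightD n true (.leaf e) e 1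
  | leafS (e : E) : SPWeightD n false (.leaf e) e (phiR n 1)
  | ser {ts : List (SPTree E)} {t : SPTree E} {e : E} {x : ℝ} :
      t ∈ ts → SPWeightD n false t e x →
      SPWeightD n true (.ser ts) e ((phiR n t.numEdges)⁻¹ * x)
  | par {ts : List (SPTree E)} {t : SPTree E} {e : E} {x : ℝ} :
      t ∈ ts → SPWeightD n true t e x →
      SPWeightD n false (.par ts) e (phiR n t.numEdges * x)

section DualAux

open List

lemma SPTree.edgeList_par' {E : Type} (ts : List (SPTree E)) :
    (SPTree.par ts).edgeList = (ts.map SPTree.edgeList).flatten := by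
  rw [SPTree.edgeList]; congr 1; simp [List.map_attach_eq_pmap]

lemma SPTree.edgeList_ser' {E : Type} (ts : List (SPTree E)) :
    (SPTree.ser ts).edgeList = (ts.map SPTree.edgeList).flatten := by
  rw [SPTree.edgeList]; congr 1; simp [List.map_attach_eq_pmap]

lemma SPTree.dual_par' {E : Type} (ts : List (SPTree E)) :
    (SPTree.par ts).dual = .ser (ts.attach.map (fun s => s.1.dual)) := by
  rw [SPTree.dual]

lemma SPTree.dual_ser' {E : Type} (ts : List (SPTree E)) :
    (SPTree.ser ts).dual = .par (ts.attach.map (fun s => s.1.dual)) := by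
  rw [SPTree.dual]

lemma SPTree.dual_leaf' {E : Type} (e : E) : (SPTree.leaf e).dual = .leaf e := by
  rw [SPTree.dual]

lemma SPTree.edgeList_dual {E : Type} : ∀ (t : SPTree E), t.dual.edgeList = t.edgeList
  | .leaf e => by rw [SPTree.dual_leaf']
  | .par ts => by
      rw [SPTree.dual_par', SPTree.edgeList_ser', SPTree.edgeList_par', List.map_map]
      congr 1
      rw [show (ts.map SPTree.edgeList) = ts.attach.map (fun s => s.1.edgeList) by
        simp [List.map_attach_eq_pmap]]
      exact List.map_congr_left (fun s _ => SPTree.edgeList_dual s.1)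
  | .ser ts => by
      rw [SPTree.dual_ser', SPTree.edgeList_par', SPTree.edgeList_ser', List.map_map]
      congr 1
      rw [show (ts.map SPTree.edgeList) = ts.attach.map (fun s => s.1.edgeList) by
        simp [List.map_attach_eq_pmap]]
      exact List.map_congr_left (fun s _ => SPTree.edgeList_dual s.1)
decreasing_by
  all_goals simp only [SPTree.par.sizeOf_spec, SPTree.ser.sizeOf_spec]
  all_goals have := List.sizeOf_lt_of_mem s.2
  all_goals omega

lemma SPTree.numEdges_dual {E : Type} (t : SPTree E) : t.dual.numEdges = t.numEdges := by
  simp [SPTree.numEdges, SPTree.edgeList_dual]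

lemma SPWeight.mem_edgeList {E : Type} {n : ℕ} {b : Bool} {t : SPTree E} {e : E} {x : ℝ}
    (h : SPWeight n b t e x) : e ∈ t.edgeList := by
  induction h with
  | leafP e => simp [SPTree.edgeList]
  | leafS e => simp [SPTree.edgeList]
  | par hmem _ ih =>
      rw [SPTree.edgeList_par']
      exact List.mem_flatten.mpr ⟨_, List.mem_map_of_mem hmem, ih⟩
  | ser hmem _ ih =>
      rw [SPTree.edgeList_ser']
      exact List.mem_flatten.mpr ⟨_, List.mem_map_of_mem hmem, ih⟩

lemma SPWeightD.mem_edgeList {E : Type} {n : ℕ} {b : Bool} {t : SPTree E} {e : E} {x : ℝ}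
    (h : SPWeightD n b t e x) : e ∈ t.edgeList := by
  induction h with
  | leafP e => simp [SPTree.edgeList]
  | leafS e => simp [SPTree.edgeList]
  | par hmem _ ih =>
      rw [SPTree.edgeList_par']
      exact List.mem_flatten.mpr ⟨_, List.mem_map_of_mem hmem, ih⟩
  | ser hmem _ ih =>
      rw [SPTree.edgeList_ser']
      exact List.mem_flatten.mpr ⟨_, List.mem_map_of_mem hmem, ih⟩

/-- In a pairwise edge-disjoint list of trees, an edge determines the tree. -/
lemma sp_uniq {E : Type} : ∀ (ts : List (SPTree E)),
    List.Pairwise (fun a b : SPTree E => a.edgeList.Disjoint b.edgeList) ts →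
    ∀ t1 ∈ ts, ∀ t2 ∈ ts, ∀ e : E, e ∈ t1.edgeList → e ∈ t2.edgeList → t1 = t2 := by
  intro ts
  induction ts with
  | nil => intro _ t1 h1; simp at h1
  | cons a l ih =>
      intro hp t1 h1 t2 h2 e he1 he2
      rw [List.pairwise_cons] at hp
      rcases List.mem_cons.mp h1 with h1e | h1m <;> rcases List.mem_cons.mp h2 with h2e | h2m
      · rw [h1e, h2e]
      · rw [h1e] at he1; exact absurd he2 (hp.1 t2 h2m he1)
      · rw [h2e] at he2; exact absurd he1 (hp.1 t1 h1m he2)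
      · exact ih hp.2 t1 h1m t2 h2m e he1 he2

lemma sp_key {E : Type} {n : ℕ} {b : Bool} {t : SPTree E} {e : E} {x : ℝ}
    (h : SPWeight n b t e x) :
    ∀ y : ℝ, t.edgeList.Nodup → SPWeightD n b t.dual e y → y = x⁻¹ := by
  induction h with
  | leafP e =>
      intro y _ hd
      rw [SPTree.dual_leaf'] at hd
      cases hd
      exact inv_one.symm
  | leafS e =>
      intro y _ hd
      rw [SPTree.dual_leaf'] at hd
      cases hd
      exact (inv_inv _).symm
  | @par ts tc e x hmem hch ih =>
      intro y hn hd
      rw [SPTree.dual_par'] at hd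
      cases hd with
      | ser hdmem hdw =>
        rename_i d y'
        obtain ⟨s, _, rfl⟩ := List.mem_map.mp hdmem
        have hed : e ∈ s.1.edgeList := by
          have := hdw.mem_edgeList
          rwa [SPTree.edgeList_dual] at this
        rw [SPTree.edgeList_par', List.nodup_flatten] at hn
        have hpw : List.Pairwise (fun a b : SPTree E => a.edgeList.Disjoint b.edgeList) ts :=
          (List.pairwise_map.mp hn.2)
        have heq : s.1 = tc := sp_uniq ts hpw s.1 s.2 tc hmem e hed hch.mem_edgeList
        rw [heq] at hdw
        have hy' := ih _ (hn.1 _ (List.mem_map_of_mem hmem)) hdw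
        rw [heq, hy', SPTree.numEdges_dual, mul_inv]
  | @ser ts tc e x hmem hch ih =>
      intro y hn hd
      rw [SPTree.dual_ser'] at hd
      cases hd with
      | par hdmem hdw =>
        rename_i d y'
        obtain ⟨s, _, rfl⟩ := List.mem_map.mp hdmem
        have hed : e ∈ s.1.edgeList := by
          have := hdw.mem_edgeList
          rwa [SPTree.edgeList_dual] at this
        rw [SPTree.edgeList_ser', List.nodup_flatten] at hn
        have hpw : List.Pairwise (fun a b : SPTree E => a.edgeList.Disjoint b.edgeList) ts :=
          (List.pairwise_map.mp hn.2)
        have heq : s.1 = tc := sp_uniq ts hpw s.1 s.2 tc hmem e hed hch.mem_edgeList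
        rw [heq] at hdw
        have hy' := ih _ (hn.1 _ (List.mem_map_of_mem hmem)) hdw
        rw [heq, hy', SPTree.numEdges_dual, mul_inv, inv_inv]

end DualAux

/-- **Dual weights are reciprocal.**  Let `G` be a nontrivial 2-connected
series-parallel graph on `n` edges with a chosen pair of terminals, given by a
decomposition tree `t`, and let `G*` be the dual two-terminal series-parallel graph,
given by the dual tree `t.dual` (parallel and serial compositions exchanged, same
edge set).  If `w` is the `G`-induced weight function and `w*` the `G*`-induced weight
function, then `w*_e = (w_e)⁻¹` for every edge `e`. -/
theorem sp_dual_weights_reciprocal (n : ℕ) {V : Type} (head tail : Fin n → V)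
    (t : SPTree (Fin n)) (l r : V)
    (hreal : SPRealizes head tail t l r Set.univ)
    (hnodup : t.edgeList.Nodup) (hall : ∀ e, e ∈ t.edgeList)
    (hroot : ∃ ts, t = SPTree.par ts ∧ 2 ≤ ts.length)
    (w wdual : Fin n → ℝ)
    (hw : ∀ e, SPWeight n true t e (w e))
    (hwdual : ∀ e, SPWeightD n true t.dual e (wdual e)) :
    ∀ e, wdual e = (w e)⁻¹ := by
  intro e
  exact sp_key (hw e) _ hnodup (hwdual e)
end

section
/- The least deviation from the coordinate subspaces is invariant under taking orthogonal complements: let n > k > 0 and let V be a k-dimensional subspace of ℝⁿ. Then the minimum, over all k-element subsets S of {1,…,n}, of the largest principal angle between V and span{e_i : i ∈ S} equals the minimum, over all (n−k)-element subsets T of {1,…,n}, of the largest principal angle between the orthogonal complement V^⊥ and span{e_i : i ∈ T}. -/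
open Module Submodule Finset

noncomputable section Aux

open scoped RealInnerProductSpace

variable {n : ℕ}

/-- coordinate subspace -/
def coordSub (n : ℕ) (S : Finset (Fin n)) : Submodule ℝ (EuclideanSpace ℝ (Fin n)) where
  carrier := {v | ∀ i, i ∉ S → v i = 0}
  add_mem' := by
    intro a b ha hb i hi
    have : (a + b) i = a i + b i := rfl
    rw [this, ha i hi, hb i hi, add_zero]
  zero_mem' := by intro i _; rfl
  smul_mem' := by
    intro c a ha i hi
    have : (c • a) i = c * a i := rfl
    rw [this, ha i hi, mul_zero]

lemma mem_coordSub {S : Finset (Fin n)} {v : EuclideanSpace ℝ (Fin n)} :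
    v ∈ coordSub n S ↔ ∀ i, i ∉ S → v i = 0 := Iff.rfl

/-- sphere within a submodule -/
def sph (A : Submodule ℝ (EuclideanSpace ℝ (Fin n))) : Set (EuclideanSpace ℝ (Fin n)) :=
  {v | v ∈ A ∧ ‖v‖ = 1}

/-- norm of projection -/
def pn (B : Submodule ℝ (EuclideanSpace ℝ (Fin n))) (v : EuclideanSpace ℝ (Fin n)) : ℝ :=
  ‖(orthogonalProjection B v : EuclideanSpace ℝ (Fin n))‖

def cI (A B : Submodule ℝ (EuclideanSpace ℝ (Fin n))) : ℝ := sInf (pn B '' sph A)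

def cS (A B : Submodule ℝ (EuclideanSpace ℝ (Fin n))) : ℝ := sSup (pn B '' sph A)

variable {A B : Submodule ℝ (EuclideanSpace ℝ (Fin n))}

lemma sph_nonempty (hA : A ≠ ⊥) : (sph A).Nonempty := by
  obtain ⟨x, hxA, hx0⟩ := Submodule.exists_mem_ne_zero_of_ne_bot hA
  exact ⟨‖x‖⁻¹ • x, A.smul_mem _ hxA, by
    rw [norm_smul, norm_inv, norm_norm, inv_mul_cancel₀ (norm_ne_zero_iff.2 hx0)]⟩

lemma sph_compact : IsCompact (sph A) := by
  have : sph A = (A : Set (EuclideanSpace ℝ (Fin n))) ∩ Metric.sphere 0 1 := by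
    ext v
    simp [sph, Set.mem_inter_iff, mem_sphere_iff_norm]
  rw [this]
  exact (isCompact_sphere (0 : EuclideanSpace ℝ (Fin n)) 1).inter_left
    (Submodule.closed_of_finiteDimensional A)

lemma pn_continuous : Continuous (pn B) :=
  continuous_norm.comp (continuous_subtype_val.comp (orthogonalProjection B).continuous)

lemma pn_nonneg (v : EuclideanSpace ℝ (Fin n)) : 0 ≤ pn B v := norm_nonneg _

lemma pn_le_norm (v : EuclideanSpace ℝ (Fin n)) : pn B v ≤ ‖v‖ := by
  simpa [pn] using (orthogonalProjection B).le_of_opNorm_le (orthogonalProjection_norm_le B) v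

lemma bddAbove_pn : BddAbove (pn B '' sph A) := by
  refine ⟨1, ?_⟩
  rintro r ⟨v, ⟨_, hv1⟩, rfl⟩
  simpa [hv1] using pn_le_norm (B := B) v

lemma bddBelow_pn : BddBelow (pn B '' sph A) := by
  refine ⟨0, ?_⟩
  rintro r ⟨v, _, rfl⟩
  exact pn_nonneg v

lemma exists_min (hA : A ≠ ⊥) :
    ∃ a ∈ sph A, IsMinOn (pn B) (sph A) a ∧ cI A B = pn B a := by
  obtain ⟨a, ha, hmin⟩ := sph_compact.exists_isMinOn (sph_nonempty hA) pn_continuous.continuousOn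
  refine ⟨a, ha, hmin, ?_⟩
  refine le_antisymm (csInf_le bddBelow_pn ⟨a, ha, rfl⟩) ?_
  refine le_csInf ⟨_, ⟨a, ha, rfl⟩⟩ ?_
  rintro r ⟨v, hv, rfl⟩
  exact hmin hv

lemma exists_max (hA : A ≠ ⊥) :
    ∃ a ∈ sph A, IsMaxOn (pn B) (sph A) a ∧ cS A B = pn B a := by
  obtain ⟨a, ha, hmax⟩ := sph_compact.exists_isMaxOn (sph_nonempty hA) pn_continuous.continuousOn
  refine ⟨a, ha, hmax, ?_⟩
  refine le_antisymm ?_ (le_csSup bddAbove_pn ⟨a, ha, rfl⟩)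
  refine csSup_le ⟨_, ⟨a, ha, rfl⟩⟩ ?_
  rintro r ⟨v, hv, rfl⟩
  exact hmax hv

lemma cI_le (hv : v ∈ sph A) : cI A B ≤ pn B v := csInf_le bddBelow_pn ⟨v, hv, rfl⟩

lemma le_cS {v : EuclideanSpace ℝ (Fin n)} (hv : v ∈ sph A) : pn B v ≤ cS A B :=
  le_csSup bddAbove_pn ⟨v, hv, rfl⟩

lemma cI_nonneg (hA : A ≠ ⊥) : 0 ≤ cI A B := by
  obtain ⟨a, ha, _, h⟩ := exists_min (B := B) hA
  rw [h]; exact pn_nonneg a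

lemma cS_nonneg (hA : A ≠ ⊥) : 0 ≤ cS A B := by
  obtain ⟨a, ha⟩ := sph_nonempty hA
  exact le_trans (pn_nonneg (B := B) a) (le_cS ha)

end Aux

noncomputable section Aux2
open scoped RealInnerProductSpace
variable {n : ℕ} {A B : Submodule ℝ (EuclideanSpace ℝ (Fin n))}

lemma inner_proj (v : EuclideanSpace ℝ (Fin n)) {b : EuclideanSpace ℝ (Fin n)} (hb : b ∈ B) :
    ⟪v, b⟫ = ⟪(orthogonalProjection B v : EuclideanSpace ℝ (Fin n)), b⟫ := by
  have h := sub_starProjection_mem_orthogonal (K := B) v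
  have h2 := (Submodule.mem_orthogonal B _).1 h b hb
  have h3 : ⟪v - (orthogonalProjection B v : EuclideanSpace ℝ (Fin n)), b⟫ = 0 := by
    rw [real_inner_comm]; exact h2
  rw [inner_sub_left] at h3
  linarith

lemma pyth {v : EuclideanSpace ℝ (Fin n)} (hv : ‖v‖ = 1) :
    pn B v ^ 2 + pn Bᗮ v ^ 2 = 1 := by
  have hsum : (orthogonalProjection B v : EuclideanSpace ℝ (Fin n)) +
      (orthogonalProjection Bᗮ v : EuclideanSpace ℝ (Fin n)) = v :=
    starProjection_add_starProjection_orthogonal (K := B) v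
  have hzero : ⟪(orthogonalProjection B v : EuclideanSpace ℝ (Fin n)),
      (orthogonalProjection Bᗮ v : EuclideanSpace ℝ (Fin n))⟫ = 0 :=
    inner_right_of_mem_orthogonal (orthogonalProjection B v).2 (orthogonalProjection Bᗮ v).2
  have := norm_add_sq_real (orthogonalProjection B v : EuclideanSpace ℝ (Fin n))
    (orthogonalProjection Bᗮ v : EuclideanSpace ℝ (Fin n))
  rw [hsum, hzero, hv] at this
  simp only [pn]
  linarith

lemma sqle_aux {x y : ℝ} (hx : 0 ≤ x) (hy : 0 ≤ y) (h : x ^ 2 ≤ y ^ 2) : x ≤ y := by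
  nlinarith

lemma sqeq_aux {x y : ℝ} (hx : 0 ≤ x) (hy : 0 ≤ y) (h : x ^ 2 = y ^ 2) : x = y := by
  nlinarith

/-- squared relation for cI/cS. -/
lemma cI_sq (hA : A ≠ ⊥) : cI A B ^ 2 = 1 - cS A Bᗮ ^ 2 := by
  obtain ⟨a, ha, hmin, hIa⟩ := exists_min (B := B) hA
  have hmax : IsMaxOn (pn Bᗮ) (sph A) a := by
    intro v hv
    have h1 := pyth (B := B) hv.2
    have h2 := pyth (B := B) ha.2
    have h3 : pn B a ≤ pn B v := hmin hv
    show pn Bᗮ v ≤ pn Bᗮ a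
    refine sqle_aux (pn_nonneg (B := Bᗮ) v) (pn_nonneg (B := Bᗮ) a) ?_
    nlinarith [pn_nonneg (B := B) v, pn_nonneg (B := B) a]
  have hS : cS A Bᗮ = pn Bᗮ a := by
    refine le_antisymm (csSup_le ⟨_, ⟨a, ha, rfl⟩⟩ ?_) (le_cS ha)
    rintro r ⟨v, hv, rfl⟩
    exact hmax hv
  rw [hIa, hS]
  have := pyth (B := B) ha.2
  linarith

end Aux2

noncomputable section Aux3
open scoped RealInnerProductSpace
variable {n : ℕ} {A B : Submodule ℝ (EuclideanSpace ℝ (Fin n))}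

/-- sup symmetry, one direction. -/
lemma cS_le_cS (hA : A ≠ ⊥) (hB : B ≠ ⊥) : cS A B ≤ cS B A := by
  obtain ⟨a, ha, _, hSa⟩ := exists_max (B := B) hA
  set s := pn B a with hs
  rcases eq_or_lt_of_le (pn_nonneg (B := B) a) with h0 | hpos
  · rw [hSa, hs, ← h0]
    exact cS_nonneg hB
  · set pb : EuclideanSpace ℝ (Fin n) := (orthogonalProjection B a : EuclideanSpace ℝ (Fin n))
      with hpb
    set b : EuclideanSpace ℝ (Fin n) := s⁻¹ • pb with hbdef
    have hbB : b ∈ B := B.smul_mem _ (orthogonalProjection B a).2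
    have hbnorm : ‖b‖ = 1 := by
      rw [hbdef, norm_smul, norm_inv, Real.norm_eq_abs, abs_of_pos hpos]
      have : ‖pb‖ = s := rfl
      rw [this, inv_mul_cancel₀ (ne_of_gt hpos)]
    have hbsph : b ∈ sph B := ⟨hbB, hbnorm⟩
    have key : s ≤ pn A b := by
      have h1 : ⟪b, a⟫ = s := by
        have h2 : ⟪a, pb⟫ = s ^ 2 := by
          rw [inner_proj a (orthogonalProjection B a).2]
          rw [real_inner_self_eq_norm_sq]
          rfl
        rw [hbdef, real_inner_smul_left ]
        rw [real_inner_comm, h2]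
        field_simp
      have h3 : ⟪(orthogonalProjection A b : EuclideanSpace ℝ (Fin n)), a⟫ = s := by
        rw [← h1, real_inner_comm, real_inner_comm _ a, ← inner_proj b ha.1]
      calc s = ⟪(orthogonalProjection A b : EuclideanSpace ℝ (Fin n)), a⟫ := h3.symm
        _ ≤ ‖(orthogonalProjection A b : EuclideanSpace ℝ (Fin n))‖ * ‖a‖ :=
            real_inner_le_norm _ _
        _ = pn A b := by rw [ha.2, mul_one]; rfl
    rw [hSa]
    exact le_trans key (le_cS hbsph)

lemma cS_comm (hA : A ≠ ⊥) (hB : B ≠ ⊥) : cS A B = cS B A :=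
  le_antisymm (cS_le_cS hA hB) (cS_le_cS hB hA)

end Aux3

noncomputable section Aux4
open scoped RealInnerProductSpace
variable {n : ℕ} {A B : Submodule ℝ (EuclideanSpace ℝ (Fin n))}

set_option maxHeartbeats 1000000 in
lemma cI_le_swap (hdim : finrank ℝ A = finrank ℝ B) (hA : A ≠ ⊥) (hB : B ≠ ⊥) :
    cI B A ≤ cI A B := by
  classical
  obtain ⟨a, ha, hmin, hIa⟩ := exists_min (B := B) hA
  set M : A →L[ℝ] B := (orthogonalProjection B).comp A.subtypeL with hM
  set N : B →L[ℝ] A := (orthogonalProjection A).comp B.subtypeL with hN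
  have hMapp : ∀ x : A, (M x : EuclideanSpace ℝ (Fin n)) =
      (orthogonalProjection B (x : EuclideanSpace ℝ (Fin n)) : EuclideanSpace ℝ (Fin n)) :=
    fun x => rfl
  have hNapp : ∀ y : B, (N y : EuclideanSpace ℝ (Fin n)) =
      (orthogonalProjection A (y : EuclideanSpace ℝ (Fin n)) : EuclideanSpace ℝ (Fin n)) :=
    fun y => rfl
  have hMnorm : ∀ x : A, ‖M x‖ = pn B (x : EuclideanSpace ℝ (Fin n)) := fun x => rfl
  have hNnorm : ∀ y : B, ‖N y‖ = pn A (y : EuclideanSpace ℝ (Fin n)) := fun y => rfl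
  have hadj : N = ContinuousLinearMap.adjoint M := by
    rw [ContinuousLinearMap.eq_adjoint_iff]
    intro y x
    have h1 : ⟪N y, x⟫ = ⟪(N y : EuclideanSpace ℝ (Fin n)), (x : EuclideanSpace ℝ (Fin n))⟫ :=
      rfl
    have h2 : ⟪y, M x⟫ = ⟪(y : EuclideanSpace ℝ (Fin n)), (M x : EuclideanSpace ℝ (Fin n))⟫ :=
      rfl
    rw [h1, h2, hNapp, hMapp]
    rw [← inner_proj (B := A) (y : EuclideanSpace ℝ (Fin n)) x.2]
    rw [real_inner_comm, inner_proj (B := B) (x : EuclideanSpace ℝ (Fin n)) y.2]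
    exact real_inner_comm _ _
  set x₀ : A := ⟨a, ha.1⟩ with hx₀def
  have hx₀norm : ‖x₀‖ = 1 := ha.2
  have hx₀ : x₀ ≠ 0 := by
    intro h
    rw [h, norm_zero] at hx₀norm
    norm_num at hx₀norm
  rcases eq_or_lt_of_le (pn_nonneg (B := B) a) with h0 | hpos
  · -- degenerate case: the minimum is 0
    have hMa : M x₀ = 0 := by
      have : ‖M x₀‖ = 0 := by rw [hMnorm]; exact h0.symm
      exact norm_eq_zero.mp this
    have hker : 0 < finrank ℝ (LinearMap.ker (M : A →ₗ[ℝ] B)) := by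
      have hmem : x₀ ∈ LinearMap.ker (M : A →ₗ[ℝ] B) := by
        simpa [LinearMap.mem_ker] using hMa
      have : LinearMap.ker (M : A →ₗ[ℝ] B) ≠ ⊥ := by
        intro h
        rw [h, Submodule.mem_bot] at hmem
        exact hx₀ hmem
      refine Nat.pos_of_ne_zero ?_
      rwa [ne_eq, Submodule.finrank_eq_zero (R := ℝ)]
    have hrk := LinearMap.finrank_range_add_finrank_ker (M : A →ₗ[ℝ] B)
    have horthrank := Submodule.finrank_add_finrank_orthogonal
      (K := LinearMap.range (M : A →ₗ[ℝ] B))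
    have horth : (LinearMap.range (M : A →ₗ[ℝ] B))ᗮ ≠ ⊥ := by
      intro h
      rw [h, finrank_bot] at horthrank
      omega
    obtain ⟨y, hy, hy0⟩ := Submodule.exists_mem_ne_zero_of_ne_bot horth
    set u : B := ‖y‖⁻¹ • y with hu
    have huorth : u ∈ (LinearMap.range (M : A →ₗ[ℝ] B))ᗮ :=
      Submodule.smul_mem _ _ hy
    have hunorm : ‖u‖ = 1 := by
      rw [hu, norm_smul, norm_inv, norm_norm, inv_mul_cancel₀ (norm_ne_zero_iff.2 hy0)]
    have hNu : N u = 0 := by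
      have h3 : ⟪M (N u), u⟫ = 0 :=
        (Submodule.mem_orthogonal _ _).1 huorth _ ⟨N u, rfl⟩
      have h4 : ⟪N u, N u⟫ = 0 := by
        rw [hadj, ContinuousLinearMap.adjoint_inner_left, real_inner_comm, ← hadj]
        exact h3
      exact inner_self_eq_zero.mp h4
    have hpnu : pn A (u : EuclideanSpace ℝ (Fin n)) = 0 := by
      rw [← hNnorm, hNu, norm_zero]
    have husph : (u : EuclideanSpace ℝ (Fin n)) ∈ sph B := ⟨u.2, hunorm⟩
    calc cI B A ≤ pn A (u : EuclideanSpace ℝ (Fin n)) := cI_le husph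
    _ = 0 := hpnu
    _ ≤ cI A B := by rw [hIa, ← h0]
  · set c := pn B a with hc
    set T : A →L[ℝ] A := (ContinuousLinearMap.adjoint M).comp M with hT
    have hTsa : IsSelfAdjoint T := by
      rw [IsSelfAdjoint, ContinuousLinearMap.star_eq_adjoint, hT,
        ContinuousLinearMap.adjoint_comp, ContinuousLinearMap.adjoint_adjoint]
    have hre : ∀ x : A, T.reApplyInnerSelf x = ‖M x‖ ^ 2 := by
      intro x
      have h5 : T.reApplyInnerSelf x = ⟪T x, x⟫ := rfl
      rw [h5, hT]
      show ⟪ContinuousLinearMap.adjoint M (M x), x⟫ = ‖M x‖ ^ 2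
      rw [ContinuousLinearMap.adjoint_inner_left, real_inner_self_eq_norm_sq]
    have hextr : IsMinOn T.reApplyInnerSelf (Metric.sphere (0 : A) ‖x₀‖) x₀ := by
      intro x hx
      have hx1 : ‖x‖ = 1 := by
        have := Metric.mem_sphere.mp hx
        rwa [dist_zero_right, hx₀norm] at this
      have hxs : (x : EuclideanSpace ℝ (Fin n)) ∈ sph A := ⟨x.2, hx1⟩
      have h4 : pn B a ≤ pn B (x : EuclideanSpace ℝ (Fin n)) := hmin hxs
      show T.reApplyInnerSelf x₀ ≤ T.reApplyInnerSelf x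
      rw [hre, hre, hMnorm, hMnorm]
      have h6 : (x₀ : EuclideanSpace ℝ (Fin n)) = a := rfl
      rw [h6]
      nlinarith [pn_nonneg (B := B) a]
    have hev := hTsa.hasEigenvector_of_isMinOn hx₀ hextr
    have hμex : ∃ μ : ℝ, T x₀ = μ • x₀ := by
      obtain ⟨h1, -⟩ := hev
      exact ⟨_, by simpa using Module.End.mem_eigenspace_iff.mp h1⟩
    obtain ⟨μ, hμ⟩ := hμex
    have hMx₀norm : ‖M x₀‖ = c := hMnorm x₀
    have hμval : μ = c ^ 2 := by
      have h5 : ⟪T x₀, x₀⟫ = μ * ‖x₀‖ ^ 2 := by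
        simp [hμ, inner_smul_left, real_inner_self_eq_norm_sq]
      have h6 : ⟪T x₀, x₀⟫ = ‖M x₀‖ ^ 2 := by rw [← hre]; rfl
      rw [hx₀norm] at h5
      rw [hMx₀norm] at h6
      rw [h6] at h5
      linarith [h5]
    set y₀ : B := c⁻¹ • M x₀ with hy₀
    have hy₀norm : ‖y₀‖ = 1 := by
      rw [hy₀, norm_smul, norm_inv, Real.norm_eq_abs, abs_of_pos hpos, hMx₀norm,
        inv_mul_cancel₀ (ne_of_gt hpos)]
    have hNy₀ : N y₀ = c • x₀ := by
      have h7 : N (M x₀) = μ • x₀ := by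
        rw [hadj]
        exact hμ
      rw [hy₀, map_smul, h7, hμval, smul_smul]
      congr 1
      field_simp
    have hpnA : pn A ((y₀ : EuclideanSpace ℝ (Fin n))) = c := by
      rw [← hNnorm, hNy₀, norm_smul, Real.norm_eq_abs, abs_of_pos hpos, hx₀norm, mul_one]
    have hysph : (y₀ : EuclideanSpace ℝ (Fin n)) ∈ sph B := ⟨y₀.2, hy₀norm⟩
    calc cI B A ≤ pn A (y₀ : EuclideanSpace ℝ (Fin n)) := cI_le hysph
    _ = c := hpnA
    _ = cI A B := hIa.symm

lemma cI_comm (hdim : finrank ℝ A = finrank ℝ B) (hA : A ≠ ⊥) (hB : B ≠ ⊥) :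
    cI A B = cI B A :=
  le_antisymm (cI_le_swap hdim.symm hB hA) (cI_le_swap hdim hA hB)

end Aux4

noncomputable section Aux5
open scoped RealInnerProductSpace
variable {n : ℕ} {A B : Submodule ℝ (EuclideanSpace ℝ (Fin n))}

lemma cI_orthcomp (hA : A ≠ ⊥) (hBo : Bᗮ ≠ ⊥) : cI A B = cI Bᗮ Aᗮ := by
  have h1 := cI_sq (A := A) (B := B) hA
  have h2 := cI_sq (A := Bᗮ) (B := Aᗮ) hBo
  rw [Submodule.orthogonal_orthogonal] at h2
  rw [cS_comm hA hBo] at h1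
  refine sqeq_aux (cI_nonneg hA) (cI_nonneg hBo) ?_
  rw [h1, h2]

lemma coordSub_orthogonal (S : Finset (Fin n)) : (coordSub n S)ᗮ = coordSub n Sᶜ := by
  ext v
  constructor
  · intro h i hiS
    have hiS' : i ∈ S := by simpa using hiS
    have he : EuclideanSpace.single i (1 : ℝ) ∈ coordSub n S := by
      intro j hj
      rw [EuclideanSpace.single_apply]
      simp only [ite_eq_right_iff]
      intro hji
      exact absurd (hji ▸ hiS') hj
    have := (Submodule.mem_orthogonal _ _).1 h _ he
    rwa [EuclideanSpace.inner_single_left, map_one, one_mul] at this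
  · intro h
    rw [Submodule.mem_orthogonal]
    intro u hu
    have : ∀ j : Fin n, u j * v j = 0 := by
      intro j
      by_cases hj : j ∈ S
      · rw [h j (by simpa using hj), mul_zero]
      · rw [hu j hj, zero_mul]
    calc ⟪u, v⟫ = ∑ j : Fin n, u j * v j := by
          rw [PiLp.inner_apply]; simp [mul_comm]
    _ = 0 := by simp [this]

lemma pn_coordSub (S : Finset (Fin n)) (v : EuclideanSpace ℝ (Fin n)) :
    pn (coordSub n S) v = Real.sqrt (∑ i ∈ S, v i ^ 2) := by
  classical
  set w : EuclideanSpace ℝ (Fin n) := WithLp.toLp 2 (fun i => if i ∈ S then v i else 0 : Fin n → ℝ) with hw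
  have hwS : w ∈ coordSub n S := by
    intro i hi
    simp [hw, hi]
  have hsub : v - w ∈ (coordSub n S)ᗮ := by
    rw [coordSub_orthogonal]
    intro i hi
    have hiS : i ∈ S := by simpa using hi
    have : (v - w) i = v i - w i := rfl
    rw [this, hw]
    simp [hiS]
  have hproj : (orthogonalProjection (coordSub n S) v : EuclideanSpace ℝ (Fin n)) = w :=
    eq_starProjection_of_mem_orthogonal hwS hsub
  rw [pn, hproj, EuclideanSpace.norm_eq]
  congr 1
  have h1 : ∀ i : Fin n, ‖w i‖ ^ 2 = if i ∈ S then v i ^ 2 else 0 := by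
    intro i
    by_cases hi : i ∈ S <;> simp [hw, hi, sq_abs]
  calc ∑ i : Fin n, ‖w i‖ ^ 2 = ∑ i : Fin n, if i ∈ S then v i ^ 2 else 0 := by
        exact Finset.sum_congr rfl fun i _ => h1 i
  _ = ∑ i ∈ S, v i ^ 2 := by rw [Finset.sum_ite_mem, Finset.univ_inter]

lemma finrank_coordSub (S : Finset (Fin n)) : finrank ℝ (coordSub n S) = S.card := by
  classical
  let f : coordSub n S →ₗ[ℝ] (S → ℝ) :=
    { toFun := fun v => fun i => (v : EuclideanSpace ℝ (Fin n)) i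
      map_add' := fun a b => rfl
      map_smul' := fun c a => rfl }
  have hinj : Function.Injective f := by
    intro a b hab
    ext i
    by_cases hi : i ∈ S
    · exact congrFun hab ⟨i, hi⟩
    · rw [a.2 i hi, b.2 i hi]
  have hsurj : Function.Surjective f := by
    intro g
    refine ⟨⟨WithLp.toLp 2 (fun i => if h : i ∈ S then g ⟨i, h⟩ else 0 : Fin n → ℝ), ?_⟩, ?_⟩
    · intro i hi
      simp [hi]
    · ext ⟨i, hi⟩
      exact dif_pos hi
  have := LinearEquiv.finrank_eq (LinearEquiv.ofBijective f ⟨hinj, hsurj⟩)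
  rw [this, Module.finrank_pi, Fintype.card_coe]

lemma coordSub_ne_bot {S : Finset (Fin n)} (hS : S.Nonempty) : coordSub n S ≠ ⊥ := by
  intro h
  have := finrank_coordSub S
  rw [h, finrank_bot] at this
  have := Finset.card_pos.mpr hS
  omega

end Aux5


/-- Cosine of the largest principal angle between the subspace `V ⊆ ℝⁿ` and the
coordinate subspace `span {e_i : i ∈ S}`: the infimum over unit vectors `v ∈ V` of the
norm of the orthogonal projection of `v` onto the coordinate subspace, this norm being
`√(∑_{i ∈ S} v i ^ 2)`. -/
noncomputable def coordPrincipalCos {n : ℕ} (V : Submodule ℝ (EuclideanSpace ℝ (Fin n)))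
    (S : Finset (Fin n)) : ℝ :=
  sInf {r : ℝ | ∃ v ∈ V, ‖v‖ = 1 ∧ r = Real.sqrt (∑ i ∈ S, v i ^ 2)}

/-- The least deviation of `V` from the `k`-dimensional coordinate subspaces of `ℝⁿ`:
the minimum over all `k`-element coordinate sets `S` of the largest principal angle
between `V` and `span {e_i : i ∈ S}`. -/
noncomputable def leastCoordDeviation (n k : ℕ)
    (V : Submodule ℝ (EuclideanSpace ℝ (Fin n))) : ℝ :=
  sInf {θ : ℝ | ∃ S : Finset (Fin n), S.card = k ∧
    θ = Real.arccos (coordPrincipalCos V S)}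

section KeyLemmas

open Module

lemma cpc_eq_cI {n : ℕ} (V : Submodule ℝ (EuclideanSpace ℝ (Fin n))) (S : Finset (Fin n)) :
    coordPrincipalCos V S = cI V (coordSub n S) := by
  unfold coordPrincipalCos cI
  congr 1
  ext r
  constructor
  · rintro ⟨v, hv, h1, rfl⟩
    exact ⟨v, ⟨hv, h1⟩, pn_coordSub S v⟩
  · rintro ⟨v, ⟨hv, h1⟩, rfl⟩
    exact ⟨v, hv, h1, pn_coordSub S v⟩

lemma cpc_orth_key {n k : ℕ} (hk : 0 < k) (hkn : k < n)
    (V : Submodule ℝ (EuclideanSpace ℝ (Fin n))) (hV : finrank ℝ V = k)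
    (S : Finset (Fin n)) (hS : S.card = k) :
    coordPrincipalCos V S = coordPrincipalCos Vᗮ Sᶜ := by
  have hVne : V ≠ ⊥ := by
    intro h
    rw [h, finrank_bot] at hV
    omega
  have hn : finrank ℝ (EuclideanSpace ℝ (Fin n)) = n := finrank_euclideanSpace_fin
  have hVo : finrank ℝ Vᗮ = n - k := by
    have := Submodule.finrank_add_finrank_orthogonal (K := V)
    rw [hV, hn] at this
    omega
  have hVone : Vᗮ ≠ ⊥ := by
    intro h
    rw [h, finrank_bot] at hVo
    omega
  have hScne : Sᶜ.Nonempty := by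
    rw [← Finset.card_pos, Finset.card_compl, Fintype.card_fin, hS]
    omega
  have hCS := coordSub_ne_bot (n := n) (S := Sᶜ) hScne
  rw [cpc_eq_cI, cpc_eq_cI]
  rw [cI_orthcomp hVne (by rw [coordSub_orthogonal]; exact hCS)]
  rw [coordSub_orthogonal]
  refine cI_comm ?_ hCS hVone
  rw [finrank_coordSub, hVo, Finset.card_compl, Fintype.card_fin, hS]

end KeyLemmas

/-- **Invariance under orthogonal complements.**  For `n > k > 0` and a `k`-dimensional
subspace `V ⊆ ℝⁿ`, the minimum over `k`-element coordinate sets `S` of the largest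
principal angle between `V` and `span {e_i : i ∈ S}` equals the minimum over
`(n−k)`-element coordinate sets `T` of the largest principal angle between `Vᗮ` and
`span {e_i : i ∈ T}`. -/
theorem leastCoordDeviation_orthogonal_complement (n k : ℕ) (hk : 0 < k) (hkn : k < n)
    (V : Submodule ℝ (EuclideanSpace ℝ (Fin n))) (hV : Module.finrank ℝ V = k) :
    leastCoordDeviation n k V = leastCoordDeviation n (n - k) Vᗮ := by
  unfold leastCoordDeviation
  congr 1
  ext θ
  constructor
  · rintro ⟨S, hS, rfl⟩
    refine ⟨Sᶜ, ?_, ?_⟩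
    · rw [Finset.card_compl, Fintype.card_fin, hS]
    · rw [cpc_orth_key hk hkn V hV S hS]
  · rintro ⟨T, hT, rfl⟩
    have hTc : Tᶜ.card = k := by
      rw [Finset.card_compl, Fintype.card_fin, hT]
      omega
    refine ⟨Tᶜ, hTc, ?_⟩
    rw [cpc_orth_key hk hkn V hV Tᶜ hTc, compl_compl]
end
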